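/- Let J be a real symmetric n×n matrix (n ≥ 2) and let k ≠ l be indices such that the k-th and l-th rows of J are equal (J k j = J l j for all j). Let S be the set of indices different from k, and suppose the principal submatrix J_{S,S} is invertible. Then the Schur complement J_{k,k} − J_{k,S} · (J_{S,S})⁻¹ · J_{S,k} equals 0. -/

import Mathlib

theorem stmt10 {n : ℕ} (hn : 2 ≤ n) (J : Matrix (Fin n) (Fin n) ℝ) (hsymm : J.IsSymm)
    (k l : Fin n) (hkl : k ≠ l) (hrows : ∀ j, J k j = J l j)
    (JSS : Matrix {i : Fin n // i ≠ k} {i : Fin n // i ≠ k} ℝ)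
    (hJSS : JSS = J.submatrix Subtype.val Subtype.val)
    (hinv : IsUnit JSS.det) :
    J k k - dotProduct (fun i : {i : Fin n // i ≠ k} => J k i.val)
      (JSS⁻¹.mulVec fun i : {i : Fin n // i ≠ k} => J i.val k) = 0 := by
  set l' : {i : Fin n // i ≠ k} := ⟨l, Ne.symm hkl⟩ with hl'
  have hcol : (fun i : {i : Fin n // i ≠ k} => J i.val k) = JSS.mulVec (Pi.single l' 1) := by
    funext i
    simp [Matrix.mulVec_single, hJSS, Matrix.submatrix_apply]
    have : J i.val k = J k i.val := (hsymm.apply _ _)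
    rw [this, hrows i.val, hsymm.apply]
  rw [hcol, Matrix.mulVec_mulVec, Matrix.nonsing_inv_mul _ hinv, Matrix.one_mulVec,
    dotProduct_single]
  have h1 : J k k = J l k := hrows k
  have h2 : J l k = J k l := hsymm.apply k l
  simp [hl', h1, h2]
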